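/- Let G be a finite group, H a normal subgroup, and suppose G is generated by H together with elements a and b such that aⁿ ∈ H, b² ∈ H, and (ab)² ∈ H, with the images of a and b generating the dihedral group G/H ≅ D_n. Let φ: H → ℂˣ be a one-dimensional representation of H whose character is G-invariant. Then φ(aⁿ)² = φ(a b a b⁻¹)ⁿ. -/
import Mathlib


/-- Let `G` be a finite group, `H` a normal subgroup, and suppose `G` is generated by `H`
together with elements `a` and `b` such that `aⁿ ∈ H`, `b² ∈ H`, `(ab)² ∈ H`, with the
images of `a` and `b` generating `G/H ≅ D_n` (`a` mapping to the rotation of order `n`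
and `b` to a reflection; in particular `a b a b⁻¹ ∈ H`).  If `φ : H → ℂˣ` is a
one-dimensional representation of `H` whose character is `G`-invariant, then
`φ(aⁿ)² = φ(a b a b⁻¹)ⁿ`. -/
theorem dihedral_relation {G : Type} [Group G] [Finite G]
    (H : Subgroup G) [hN : H.Normal] (n : ℕ) (hn : 0 < n) (a b : G)
    (hgen : Subgroup.closure ((H : Set G) ∪ {a, b}) = ⊤)
    (ha : a ^ n ∈ H) (hb : b ^ 2 ∈ H) (hab2 : (a * b) ^ 2 ∈ H)
    (hmem : a * b * a * b⁻¹ ∈ H)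
    (hdih : ∃ e : (G ⧸ H) ≃* DihedralGroup n,
      e ((a : G ⧸ H)) = DihedralGroup.r 1 ∧ e ((b : G ⧸ H)) = DihedralGroup.sr 0)
    (φ : H →* ℂˣ)
    (hinv : ∀ (g : G) (h : H),
      φ ⟨g⁻¹ * (h : G) * g, by simpa using hN.conj_mem h h.2 g⁻¹⟩ = φ h) :
    (φ ⟨a ^ n, ha⟩) ^ 2 = (φ ⟨a * b * a * b⁻¹, hmem⟩) ^ n := by
  have key : ∀ m : ℕ, ∃ h : H, (a⁻¹ * (a * b * a * b⁻¹)) ^ m = (a ^ m)⁻¹ * h ∧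
      φ h = (φ ⟨a * b * a * b⁻¹, hmem⟩) ^ m := by
    intro m
    induction m with
    | zero => exact ⟨1, by simp, by simp⟩
    | succ m ih =>
      obtain ⟨h, hh, hφ⟩ := ih
      refine ⟨⟨a * h * a⁻¹, by simpa using hN.conj_mem h h.2 a⟩ *
        ⟨a * b * a * b⁻¹, hmem⟩, ?_, ?_⟩
      · rw [pow_succ, hh]
        push_cast
        group
      · rw [map_mul, pow_succ, ← hφ]
        congr 1
        have := hinv a⁻¹ h
        simpa using this
  obtain ⟨h, hh, hφ⟩ := key n
  have hbab : b * a * b⁻¹ = a⁻¹ * (a * b * a * b⁻¹) := by group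
  have h1 : b * a ^ n * b⁻¹ = (a ^ n)⁻¹ * h := by
    rw [← hh, ← hbab]
    rw [show b * a * b⁻¹ = b * a * b⁻¹ from rfl]
    rw [conj_pow]
  have hmem2 : b * a ^ n * b⁻¹ ∈ H := by
    rw [h1]; exact H.mul_mem (H.inv_mem ha) h.2
  have e1 : φ ⟨b * a ^ n * b⁻¹, hmem2⟩ = φ ⟨a ^ n, ha⟩ := by
    have := hinv b⁻¹ ⟨a ^ n, ha⟩
    simpa using this
  have e2 : (⟨b * a ^ n * b⁻¹, hmem2⟩ : H) = (⟨a ^ n, ha⟩ : H)⁻¹ * h :=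
    Subtype.ext (by simpa using h1)
  rw [e2, map_mul, map_inv, hφ] at e1
  rw [sq]
  exact (inv_mul_eq_iff_eq_mul.mp e1).symm
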